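/- Let Δ be a Boolean algebra of formulas in variable x, and let μ be a global Δ-measure which is smooth over a small model M. Then μ is generically stable over M: (1) μ is finitely satisfiable in M, i.e., every φ(x;b) ∈ Δ(𝒰) with μ(φ(x;b)) > 0 is satisfied by a tuple from M; and (2) μ is M-definable, i.e., for every φ(x;y) ∈ Δ and every r, the set {b ∈ 𝒰 : μ(φ(x;b)) < r} is open in the M-logic topology (a union of sets defined by formulas over M). -/

import Mathlib

namespace KeislerPaper

open FirstOrder FirstOrder.Language Set MeasureTheory
open scoped ENNReal Classical

universe u v

/-! ### Finitely additive probability measures on a distinguished collection of sets.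

A Keisler measure over a parameter set `A` is represented as a real-valued set-function
which is a finitely additive probability measure on the collection of `A`-definable sets
(its values outside the distinguished collection are irrelevant, and all notions below
only refer to values on the relevant collections). -/

structure FAM (X : Type u) (D : Set (Set X)) : Type u where
  val : Set X → ℝ
  nonneg : ∀ s ∈ D, 0 ≤ val s
  isProb : val Set.univ = 1
  additive : ∀ s t : Set X, s ∈ D → t ∈ D → Disjoint s t → val (s ∪ t) = val s + val t

/-- Two set-functions agree on a collection of sets. -/
def agreeOn {X : Type u} (D : Set (Set X)) (f g : Set X → ℝ) : Prop :=
  ∀ s ∈ D, f s = g s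

/-- A measure is (the measure associated to) a type when it is `0-1`-valued. -/
def IsTypeOn {X : Type u} (D : Set (Set X)) (f : Set X → ℝ) : Prop :=
  ∀ s ∈ D, f s = 0 ∨ f s = 1

/-- The `D₀`-restriction of `f` has a unique extension to a finitely additive
probability measure on the collection `D₁`: this is smoothness of the restriction of `f`
to `D₀` relative to `D₁`. -/
def SmoothOn {X : Type u} (D₀ D₁ : Set (Set X)) (f : Set X → ℝ) : Prop :=
  (∃ ν : FAM X D₁, agreeOn D₀ ν.val f) ∧
    ∀ ν₁ ν₂ : FAM X D₁, agreeOn D₀ ν₁.val f → agreeOn D₀ ν₂.val f →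
      agreeOn D₁ ν₁.val ν₂.val

/-- The Dirac measure at a point (the measure associated to a realized type). -/
noncomputable def diracF {X : Type u} (D : Set (Set X)) (x : X) : FAM X D where
  val s := if x ∈ s then 1 else 0
  nonneg s _ := by by_cases h : x ∈ s <;> simp [h]
  isProb := by simp
  additive s t _ _ hd := by
    by_cases hs : x ∈ s
    · have ht : x ∉ t := fun ht => Set.disjoint_left.mp hd hs ht
      simp [Set.mem_union, hs, ht]
    · by_cases ht : x ∈ t <;> simp [Set.mem_union, hs, ht]

/-- Convex combination `t·μ + (1-t)·ν` of two finitely additive measures. -/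
noncomputable def FAM.mix {X : Type u} {D : Set (Set X)} (t : ℝ) (h0 : 0 ≤ t) (h1 : t ≤ 1)
    (μ ν : FAM X D) : FAM X D where
  val s := t * μ.val s + (1 - t) * ν.val s
  nonneg s hs := add_nonneg (mul_nonneg h0 (μ.nonneg s hs))
    (mul_nonneg (by linarith) (ν.nonneg s hs))
  isProb := by
    show t * μ.val Set.univ + (1 - t) * ν.val Set.univ = 1
    rw [μ.isProb, ν.isProb]; ring
  additive s s' hs hs' hd := by
    show t * μ.val (s ∪ s') + (1 - t) * ν.val (s ∪ s') =
      t * μ.val s + (1 - t) * ν.val s + (t * μ.val s' + (1 - t) * ν.val s')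
    rw [μ.additive s s' hs hs' hd, ν.additive s s' hs hs' hd]; ring

/-! ### Keisler measures -/

/-- The collection of `A`-definable subsets of `α → U`. -/
def Dset (L : FirstOrder.Language.{u, u}) {U : Type u} [L.Structure U] (A : Set U)
    (α : Type u) : Set (Set (α → U)) :=
  {s | A.Definable L s}

/-- A Keisler measure over the parameter set `A`, in the variable(s) `α`:
a finitely additive probability measure on the Boolean algebra of `A`-definable sets. -/
abbrev KMeasure (L : FirstOrder.Language.{u, u}) {U : Type u} [L.Structure U] (A : Set U)
    (α : Type u) : Type u :=
  FAM (α → U) (Dset L A α)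

/-- The set `φ(U; b)` defined by a formula `φ(x; y)` with the parameters `b`. -/
def defFam {U : Type u} {L' : FirstOrder.Language.{u, u}} [L'.Structure U] {α : Type u}
    {m : ℕ} (φ : L'.Formula (α ⊕ Fin m)) (b : Fin m → U) : Set (α → U) :=
  {a | φ.Realize (Sum.elim a b)}

/-- `b ≡_A b'` : the tuples `b` and `b'` have the same type over `A`. -/
def SameTypeOver (L : FirstOrder.Language.{u, u}) {U : Type u} [L.Structure U] (A : Set U)
    {m : ℕ} (b b' : Fin m → U) : Prop :=
  ∀ φ : (L[[A]]).Formula (Fin m), φ.Realize b ↔ φ.Realize b'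

/-- `f` (the values of a global Keisler measure) is invariant over `Mset`. -/
def InvariantOn (L : FirstOrder.Language.{u, u}) {U : Type u} [L.Structure U] {α : Type u}
    (f : Set (α → U) → ℝ) (Mset : Set U) : Prop :=
  ∀ (m : ℕ) (φ : (L[[Mset]]).Formula (α ⊕ Fin m)) (b b' : Fin m → U),
    SameTypeOver L Mset b b' → f (defFam φ b) = f (defFam φ b')

/-- A measure (given by its values `f` on the collection `D`) is finitely satisfiable in
`Mset`: every set in `D` of positive measure contains a tuple from `Mset`. -/
def FinSatIn {U : Type u} {α : Type u} (D : Set (Set (α → U))) (f : Set (α → U) → ℝ)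
    (Mset : Set U) : Prop :=
  ∀ s ∈ D, 0 < f s → ∃ a ∈ s, ∀ i, a i ∈ Mset

/-- A global Keisler measure (given by its values `f`) is definable over `Mset`:
it is `Mset`-invariant and for every formula `φ(x;y)` the induced map on `S_y(Mset)` is
continuous, i.e. the sets `{b : μ(φ(x;b)) < r}` and `{b : μ(φ(x;b)) > r}` are open in the
`Mset`-logic topology. -/
def DefinableOver (L : FirstOrder.Language.{u, u}) {U : Type u} [L.Structure U] {α : Type u}
    (f : Set (α → U) → ℝ) (Mset : Set U) : Prop :=
  InvariantOn L f Mset ∧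
    ∀ (m : ℕ) (φ : L.Formula (α ⊕ Fin m)) (r : ℝ),
      (∀ b : Fin m → U, f (defFam φ b) < r →
        ∃ ψ : (L[[Mset]]).Formula (Fin m), ψ.Realize b ∧
          ∀ b' : Fin m → U, ψ.Realize b' → f (defFam φ b') < r) ∧
      (∀ b : Fin m → U, r < f (defFam φ b) →
        ∃ ψ : (L[[Mset]]).Formula (Fin m), ψ.Realize b ∧
          ∀ b' : Fin m → U, ψ.Realize b' → r < f (defFam φ b'))

/-! ### NIP -/

/-- A formula `φ(x; y)` has the independence property (in `U`). -/
def HasIP {L : FirstOrder.Language.{u, u}} (U : Type u) [L.Structure U] {α : Type u}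
    {β : Type v} (φ : L.Formula (α ⊕ β)) : Prop :=
  ∃ (a : ℕ → α → U) (c : Set ℕ → β → U),
    ∀ (i : ℕ) (S : Set ℕ), φ.Realize (Sum.elim (a i) (c S)) ↔ i ∈ S

/-- The (complete theory of the) structure `U` is NIP: no formula has the independence
property. -/
def TheoryNIP (L : FirstOrder.Language.{u, u}) (U : Type u) [L.Structure U] : Prop :=
  ∀ (α β : Type u) (φ : L.Formula (α ⊕ β)), ¬ HasIP U φ

/-! ### Models, saturation, monster model -/

/-- `S` is (the underlying set of) an elementary submodel of `U`, via the Tarski–Vaught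
criterion. -/
def IsElemSubset (L' : FirstOrder.Language.{u, u}) (U : Type u) [L'.Structure U]
    (S : Set U) : Prop :=
  S.Nonempty ∧
    ∀ (m : ℕ) (φ : L'.Formula (Fin m ⊕ Fin 1)) (b : Fin m → U), (∀ i, b i ∈ S) →
      (∃ a : Fin 1 → U, φ.Realize (Sum.elim b a)) →
      ∃ a : Fin 1 → U, (∀ i, a i ∈ S) ∧ φ.Realize (Sum.elim b a)

/-- The submodel (with underlying set) `S` of `U` is `κ`-saturated: every type over a
subset `A ⊆ S` with `|A| < κ` which is finitely satisfiable in `S` is realized in `S`. -/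
def SaturatedIn (L' : FirstOrder.Language.{u, u}) (U : Type u) [L'.Structure U] (S : Set U)
    (κ : Cardinal.{u}) : Prop :=
  ∀ A : Set U, A ⊆ S → Cardinal.mk A < κ →
    ∀ Φ : Set ((L'[[A]]).Formula (Fin 1)),
      (∀ Φ₀ : Finset ((L'[[A]]).Formula (Fin 1)), ↑Φ₀ ⊆ Φ →
        ∃ b : Fin 1 → U, (∀ i, b i ∈ S) ∧ ∀ φ ∈ Φ₀, Formula.Realize φ b) →
      ∃ b : Fin 1 → U, (∀ i, b i ∈ S) ∧ ∀ φ ∈ Φ, Formula.Realize φ b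

/-- `A` is small with respect to the degree of saturation `κ` of the monster model. -/
def SmallSet (L : FirstOrder.Language.{u, u}) {U : Type u} (κ : Cardinal.{u}) (A : Set U) :
    Prop :=
  Cardinal.mk A + L.card + Cardinal.aleph0 < κ

/-- `Mset ≺⁺ Nset` : `Nset` is a `(|Mset| + |T|)⁺`-saturated elementary extension. -/
def PlusExt (L' : FirstOrder.Language.{u, u}) (U : Type u) [L'.Structure U]
    (Mset Nset : Set U) : Prop :=
  Mset ⊆ Nset ∧ IsElemSubset L' U Nset ∧
    SaturatedIn L' U Nset (Order.succ (Cardinal.mk Mset + L'.card + Cardinal.aleph0))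

/-- `U` is a monster model of degree `κ`: it is `κ`-saturated and strongly
`κ`-homogeneous. -/
def IsMonster (L : FirstOrder.Language.{u, u}) (U : Type u) [L.Structure U]
    (κ : Cardinal.{u}) : Prop :=
  (∀ A : Set U, Cardinal.mk A < κ →
    ∀ Φ : Set ((L[[A]]).Formula (Fin 1)),
      (∀ Φ₀ : Finset ((L[[A]]).Formula (Fin 1)), ↑Φ₀ ⊆ Φ →
        ∃ b : Fin 1 → U, ∀ φ ∈ Φ₀, Formula.Realize φ b) →
      ∃ b : Fin 1 → U, ∀ φ ∈ Φ, Formula.Realize φ b) ∧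
  ∀ (β : Type u), Cardinal.mk β < κ → ∀ a a' : β → U,
    (∀ φ : L.Formula β, φ.Realize a ↔ φ.Realize a') →
    ∃ σ : U ≃[L] U, ∀ i, σ (a i) = a' i

/-! ### Heirs -/

/-- `f` (the values of a measure over `Bset ⊇ Mset`) is an heir over `Mset`. -/
def IsHeir (L : FirstOrder.Language.{u, u}) {U : Type u} [L.Structure U] {α : Type u}
    (f : Set (α → U) → ℝ) (Mset Bset : Set U) : Prop :=
  ∀ ε : ℝ, 0 < ε → ∀ (n m : ℕ) (φ : Fin n → (L[[Mset]]).Formula (α ⊕ Fin m))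
    (b : Fin m → U), (∀ j, b j ∈ Bset) →
    ∃ d : Fin m → U, (∀ j, d j ∈ Mset) ∧
      ∀ i : Fin n, |f (defFam (φ i) b) - f (defFam (φ i) d)| < ε

/-! ### Amalgams and products -/

/-- The cylinder over the first block of variables. -/
def cylL {U : Type u} {α : Type u} (β : Type u) (s : Set (α → U)) : Set ((α ⊕ β) → U) :=
  {h | (fun a => h (Sum.inl a)) ∈ s}

/-- The cylinder over the second block of variables. -/
def cylR {U : Type u} (α : Type u) {β : Type u} (t : Set (β → U)) : Set ((α ⊕ β) → U) :=
  {h | (fun b => h (Sum.inr b)) ∈ t}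

/-- `w` (the values of a measure in the variables `x y`) is a separated amalgam over `A` of
`f` (in variable `x`) and `g` (in variable `y`): `w(φ(x) ∧ ψ(y)) = f(φ(x))·g(ψ(y))`. -/
def SepAmalgamOn (L : FirstOrder.Language.{u, u}) {U : Type u} [L.Structure U]
    {α β : Type u} (A : Set U) (w : Set ((α ⊕ β) → U) → ℝ) (f : Set (α → U) → ℝ)
    (g : Set (β → U) → ℝ) : Prop :=
  ∀ (s : Set (α → U)) (t : Set (β → U)), A.Definable L s → A.Definable L t →
    w (cylL β s ∩ cylR α t) = f s * g t

/-! ### The product of invariant measures (via integration on the type space).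

For a global measure `ν` and a small model `N`, the regular Borel extension of `ν|N` to
the type space `S_y(N)` is encoded by the Carathéodory outer measure generated by `ν` on
the `N`-definable sets, and integrals against it are defined by the layer-cake formula. -/

/-- The outer measure on `β → U` generated by the values `νv` on `Nset`-definable sets. -/
noncomputable def outerOf (L : FirstOrder.Language.{u, u}) {U : Type u} [L.Structure U]
    {β : Type u} (νv : Set (β → U) → ℝ) (Nset : Set U) : Set (β → U) → ℝ≥0∞ := fun E =>
  ⨅ (D : ℕ → Set (β → U)) (_ : ∀ n, Nset.Definable L (D n)) (_ : E ⊆ ⋃ n, D n),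
    ∑' n, ENNReal.ofReal (νv (D n))

/-- The integral `∫_{S_y(N)} f dν`, via the layer-cake formula. -/
noncomputable def ointegral (L : FirstOrder.Language.{u, u}) {U : Type u} [L.Structure U]
    {β : Type u} (νv : Set (β → U) → ℝ) (Nset : Set U) (f : (β → U) → ℝ) : ℝ :=
  (∫⁻ t in Set.Ioi (0 : ℝ), outerOf L νv Nset {b | t < f b}).toReal

/-- `ω = μ(x) ⊗ ν(y)` : for every set `s` definable over a small model `Nset ⊇ Mset`,
`ω(s) = ∫ μ(s_b) dν(b)`, the integral over `S_y(Nset)` of the `μ`-measures of the fibers.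
(Here `μ` is the `Mset`-invariant factor.) -/
def IsTensorL (L : FirstOrder.Language.{u, u}) {U : Type u} [L.Structure U] {α β : Type u}
    (Mset : Set U) (κ : Cardinal.{u}) (μ : KMeasure L (Set.univ : Set U) α)
    (ν : KMeasure L (Set.univ : Set U) β) (ω : KMeasure L (Set.univ : Set U) (α ⊕ β)) :
    Prop :=
  ∀ (s : Set ((α ⊕ β) → U)) (Nset : Set U), IsElemSubset L U Nset → Mset ⊆ Nset →
    SmallSet L κ Nset → Nset.Definable L s →
    ω.val s = ointegral L ν.val Nset fun b => μ.val {a | Sum.elim a b ∈ s}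

/-- `ω = ν(y) ⊗ μ(x)` where `ω` is a measure in the variables `(x, y)` (the first
block of variables is that of `μ`, the second that of the `Mset`-invariant factor `ν`). -/
def IsTensorR (L : FirstOrder.Language.{u, u}) {U : Type u} [L.Structure U] {α β : Type u}
    (Mset : Set U) (κ : Cardinal.{u}) (ν : KMeasure L (Set.univ : Set U) β)
    (μ : KMeasure L (Set.univ : Set U) α) (ω : KMeasure L (Set.univ : Set U) (α ⊕ β)) :
    Prop :=
  ∀ (s : Set ((α ⊕ β) → U)) (Nset : Set U), IsElemSubset L U Nset → Mset ⊆ Nset →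
    SmallSet L κ Nset → Nset.Definable L s →
    ω.val s = ointegral L μ.val Nset fun a => ν.val {b | Sum.elim a b ∈ s}

/-! ### Pairs of models: the language `L_P = L ∪ {P}` -/

/-- The language with a single unary predicate `P`. -/
def pLang : FirstOrder.Language.{u, u} where
  Functions := fun _ => PEmpty
  Relations := fun n =>
    match n with
    | 1 => PUnit
    | _ => PEmpty

/-- The `pLang`-structure on `U` in which `P` is interpreted by the subset `PU`. -/
def pStruct {U : Type u} (PU : Set U) : pLang.{u}.Structure U where
  funMap := fun f _ => PEmpty.elim f
  RelMap := fun {n} r x =>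
    match n, r, x with
    | 1, _, x => x 0 ∈ PU
    | 0, r, _ => PEmpty.elim r
    | _ + 2, r, _ => PEmpty.elim r

/-- The language `L_P`, obtained from `L` by adding a new unary predicate `P`. -/
def LP (L : FirstOrder.Language.{u, u}) : FirstOrder.Language.{u, u} :=
  L.sum pLang

/-- The `L_P`-structure `(U, PU)` on `U`, where `P` is interpreted by `PU`. -/
def pairStr (L : FirstOrder.Language.{u, u}) {U : Type u} [L.Structure U] (PU : Set U) :
    (LP L).Structure U :=
  letI : pLang.{u}.Structure U := pStruct PU
  FirstOrder.Language.sumStructure L pLang U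

/-- `S` is an elementary submodel of the pair `(U, PU)` in the language `L_P`. -/
def PIsElemSubset (L : FirstOrder.Language.{u, u}) {U : Type u} [L.Structure U]
    (PU S : Set U) : Prop :=
  @IsElemSubset (LP L) U (pairStr L PU) S

/-- The pair `Mset ≺⁺ Nset` inside `(U, PU)`, in the language `L_P`. -/
def PairPlusExt (L : FirstOrder.Language.{u, u}) {U : Type u} [L.Structure U]
    (PU Mset Nset : Set U) : Prop :=
  @PlusExt (LP L) U (pairStr L PU) Mset Nset

/-- `P(x)` : the set of tuples all of whose coordinates satisfy the predicate `P`. -/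
def PSetC {U : Type u} (PU : Set U) (α : Type u) : Set (α → U) :=
  {a | ∀ i, a i ∈ PU}

/-- The collection of `Δ(A)`-definable sets, where `Δ` is the Boolean algebra of formulas
generated by `L`-formulas together with `P(x)`: these are exactly the sets
`(s₁ ∩ P) ∪ (s₂ \ P)` with `s₁, s₂` being `A`-definable `L`-sets. -/
def PDset (L : FirstOrder.Language.{u, u}) {U : Type u} [L.Structure U] (PU A : Set U)
    (α : Type u) : Set (Set (α → U)) :=
  {s | ∃ s₁ s₂ : Set (α → U), A.Definable L s₁ ∧ A.Definable L s₂ ∧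
    s = (s₁ ∩ PSetC PU α) ∪ (s₂ \ PSetC PU α)}

/-! ### The canonical retraction -/

/-- The defining relation of the retraction `F̃_M` of the paper: `g` (the values of
`F̃_M(μ)`) agrees over `M'` with (the `L`-reduct of) every global `Δ`-measure extending
`μ|N` and giving `P(x)` measure `1`. Here `f` gives the values of `μ`, and the ambient
data is `M ≺⁺ M'`, `(M', M) ≺⁺ (N', N)`, with `(U, PU)` an elementary extension of the
pair `(N', N)`. -/
def TildeFMRel (L : FirstOrder.Language.{u, u}) {U : Type u} [L.Structure U] {α : Type u}
    (M'set Nset PU : Set U) (f g : Set (α → U) → ℝ) : Prop :=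
  ∀ ν : FAM (α → U) (PDset L PU Set.univ α),
    agreeOn (Dset L Nset α) ν.val f → ν.val (PSetC PU α) = 1 →
    agreeOn (Dset L M'set α) g ν.val

/-- `F` is the canonical retraction `F_M` (of Chernikov–Pillay–Simon) from the space of
global `Mset`-invariant Keisler measures onto the space of global measures finitely
satisfiable in `Mset`: it maps invariant measures to finitely satisfiable ones, fixes the
finitely satisfiable ones, satisfies `F(μ)|M = μ|M`, is affine and continuous, and agrees
on `Mset`-invariant types with Simon's canonical retraction (constructed via the pair
`(M', Mset) ≺⁺ (N', Nset)`, elementarily embedded in `(U, PU)`). -/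
def IsCPS (L : FirstOrder.Language.{u, u}) {U : Type u} [L.Structure U]
    (Mset M'set Nset PU : Set U)
    (F : ∀ γ : Type u, KMeasure L (Set.univ : Set U) γ → KMeasure L (Set.univ : Set U) γ) :
    Prop :=
  (∀ (γ : Type u) (μ : KMeasure L (Set.univ : Set U) γ), InvariantOn L μ.val Mset →
    InvariantOn L (F γ μ).val Mset ∧
      FinSatIn (Dset L (Set.univ : Set U) γ) (F γ μ).val Mset ∧
      agreeOn (Dset L Mset γ) (F γ μ).val μ.val) ∧
  (∀ (γ : Type u) (μ : KMeasure L (Set.univ : Set U) γ), InvariantOn L μ.val Mset →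
    FinSatIn (Dset L (Set.univ : Set U) γ) μ.val Mset →
    agreeOn (Dset L (Set.univ : Set U) γ) (F γ μ).val μ.val) ∧
  (∀ (γ : Type u) (μ ν : KMeasure L (Set.univ : Set U) γ), InvariantOn L μ.val Mset →
    InvariantOn L ν.val Mset → ∀ (t : ℝ) (h0 : 0 ≤ t) (h1 : t ≤ 1),
      agreeOn (Dset L (Set.univ : Set U) γ) (F γ (FAM.mix t h0 h1 μ ν)).val
        (FAM.mix t h0 h1 (F γ μ) (F γ ν)).val) ∧
  (∀ (γ : Type u) (μ : KMeasure L (Set.univ : Set U) γ), InvariantOn L μ.val Mset →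
    ∀ s ∈ Dset L (Set.univ : Set U) γ, ∀ ε : ℝ, 0 < ε →
      ∃ (k : ℕ) (ts : Fin k → Set (γ → U)) (δ : ℝ), 0 < δ ∧
        (∀ i, (Set.univ : Set U).Definable L (ts i)) ∧
        ∀ ν : KMeasure L (Set.univ : Set U) γ, InvariantOn L ν.val Mset →
          (∀ i, |ν.val (ts i) - μ.val (ts i)| < δ) →
          |(F γ ν).val s - (F γ μ).val s| < ε) ∧
  (∀ (γ : Type u) (p : KMeasure L (Set.univ : Set U) γ), InvariantOn L p.val Mset →
    IsTypeOn (Dset L (Set.univ : Set U) γ) p.val →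
    InvariantOn L (F γ p).val Mset ∧ TildeFMRel L M'set Nset PU p.val (F γ p).val)

/-! ### Indiscernible measures and products of smooth measures -/

/-- The cylinder in the `i`-th copy of the variables, inside an `ω`-indexed product. -/
def cylAt {U : Type u} {α : Type u} (i : ℕ) (s : Set (α → U)) : Set ((ℕ × α) → U) :=
  {h | (fun a => h (i, a)) ∈ s}

/-- A measure in the variables `(x_i)_{i < ω}` (given by its values `f`) is indiscernible
over `Mset`. -/
def IndiscernibleOver (L : FirstOrder.Language.{u, u}) {U : Type u} [L.Structure U]
    {α : Type u} (f : Set ((ℕ × α) → U) → ℝ) (Mset : Set U) : Prop :=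
  ∀ (n : ℕ) (φ : (L[[Mset]]).Formula (Fin n × α)) (i j : Fin n → ℕ),
    StrictMono i → StrictMono j →
    f {h | φ.Realize fun p => h (i p.1, p.2)} = f {h | φ.Realize fun p => h (j p.1, p.2)}

/-! ### Local (Δ-) measures -/

/-- The collection of instances, with parameters in `A`, of the formulas in the family
`Δ` (a family of formulas `φ(x; y)` in the object variables `α`). -/
def DeltaSet (L : FirstOrder.Language.{u, u}) {U : Type u} [L.Structure U] {α : Type u}
    (Δ : ∀ m : ℕ, Set (L.Formula (α ⊕ Fin m))) (A : Set U) : Set (Set (α → U)) :=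
  {s | ∃ (m : ℕ) (φ : L.Formula (α ⊕ Fin m)) (b : Fin m → U),
    φ ∈ Δ m ∧ (∀ j, b j ∈ A) ∧ s = defFam φ b}

/-- A collection of sets is a Boolean algebra of sets. -/
def IsBoolAlg {X : Type u} (D : Set (Set X)) : Prop :=
  Set.univ ∈ D ∧ (∀ s ∈ D, sᶜ ∈ D) ∧ ∀ s ∈ D, ∀ t ∈ D, s ∩ t ∈ D

/-- The operation `φ(x, y) ↦ (∃ y) φ(x, y)` on subsets of the `xy`-variable space. -/
def exY {U : Type u} {α β : Type u} (s : Set ((α ⊕ β) → U)) : Set ((α ⊕ β) → U) :=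
  {h | ∃ b : β → U, Sum.elim (fun a => h (Sum.inl a)) b ∈ s}

/-- A global Keisler measure (given by its values `f`) is smooth: its restriction to some
small model has a unique extension to a global Keisler measure. -/
def GSmooth (L : FirstOrder.Language.{u, u}) {U : Type u} [L.Structure U]
    (κ : Cardinal.{u}) {α : Type u} (f : Set (α → U) → ℝ) : Prop :=
  ∃ M₀ : Set U, IsElemSubset L U M₀ ∧ SmallSet L κ M₀ ∧
    SmoothOn (Dset L M₀ α) (Dset L (Set.univ : Set U) α) f



/-! ### Auxiliary lemmas for the proof -/

section Abstract

variable {X : Type u}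

/-- indicator function -/
noncomputable def ind (s : Set X) : X → ℝ := fun x => if x ∈ s then 1 else 0

lemma ind_nonneg (s : Set X) (x : X) : 0 ≤ ind s x := by
  unfold ind; split <;> norm_num

lemma ind_le_one (s : Set X) (x : X) : ind s x ≤ 1 := by
  unfold ind; split <;> norm_num

lemma ind_of_mem {s : Set X} {x : X} (h : x ∈ s) : ind s x = 1 := if_pos h

lemma ind_of_not_mem {s : Set X} {x : X} (h : x ∉ s) : ind s x = 0 := if_neg h

lemma ind_mono {s t : Set X} (h : s ⊆ t) (x : X) : ind s x ≤ ind t x := by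
  unfold ind
  by_cases hx : x ∈ s
  · rw [if_pos hx, if_pos (h hx)]
  · rw [if_neg hx]; exact ind_nonneg t x

noncomputable def lfun (l : List (Set X × ℝ)) (x : X) : ℝ :=
  (l.map fun p => p.2 * ind p.1 x).sum

noncomputable def lval (μv : Set X → ℝ) (l : List (Set X × ℝ)) : ℝ :=
  (l.map fun p => p.2 * μv p.1).sum

noncomputable def lvalt (μv : Set X → ℝ) (t : Set X) (l : List (Set X × ℝ)) : ℝ :=
  (l.map fun p => p.2 * μv (p.1 ∩ t)).sum

@[simp] lemma lfun_nil (x : X) : lfun ([] : List (Set X × ℝ)) x = 0 := rfl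
@[simp] lemma lval_nil (μv : Set X → ℝ) : lval μv ([] : List (Set X × ℝ)) = 0 := rfl
@[simp] lemma lvalt_nil (μv : Set X → ℝ) (t : Set X) : lvalt μv t ([] : List (Set X × ℝ)) = 0 := rfl

@[simp] lemma lfun_cons (p : Set X × ℝ) (l : List (Set X × ℝ)) (x : X) :
    lfun (p :: l) x = p.2 * ind p.1 x + lfun l x := by
  simp [lfun]

@[simp] lemma lval_cons (μv : Set X → ℝ) (p : Set X × ℝ) (l : List (Set X × ℝ)) :
    lval μv (p :: l) = p.2 * μv p.1 + lval μv l := by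
  simp [lval]

@[simp] lemma lvalt_cons (μv : Set X → ℝ) (t : Set X) (p : Set X × ℝ) (l : List (Set X × ℝ)) :
    lvalt μv t (p :: l) = p.2 * μv (p.1 ∩ t) + lvalt μv t l := by
  simp [lvalt]

lemma lfun_append (l₁ l₂ : List (Set X × ℝ)) (x : X) :
    lfun (l₁ ++ l₂) x = lfun l₁ x + lfun l₂ x := by
  simp [lfun]

lemma lval_append (μv : Set X → ℝ) (l₁ l₂ : List (Set X × ℝ)) :
    lval μv (l₁ ++ l₂) = lval μv l₁ + lval μv l₂ := by
  simp [lval]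

lemma lfun_neg (l : List (Set X × ℝ)) (x : X) :
    lfun (l.map fun p => (p.1, -p.2)) x = -lfun l x := by
  induction l with
  | nil => simp
  | cons p l ih => simp [ih]; ring

lemma lval_neg (μv : Set X → ℝ) (l : List (Set X × ℝ)) :
    lval μv (l.map fun p => (p.1, -p.2)) = -lval μv l := by
  induction l with
  | nil => simp
  | cons p l ih => simp [ih]; ring

lemma lfun_smul (c : ℝ) (l : List (Set X × ℝ)) (x : X) :
    lfun (l.map fun p => (p.1, c * p.2)) x = c * lfun l x := by
  induction l with
  | nil => simp
  | cons p l ih => simp [ih]; ring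

lemma lval_smul (μv : Set X → ℝ) (c : ℝ) (l : List (Set X × ℝ)) :
    lval μv (l.map fun p => (p.1, c * p.2)) = c * lval μv l := by
  induction l with
  | nil => simp
  | cons p l ih => simp [ih]; ring

lemma mem_neg_list {l : List (Set X × ℝ)} {D : Set (Set X)} (h : ∀ p ∈ l, p.1 ∈ D) :
    ∀ p ∈ (l.map fun p => (p.1, -p.2)), p.1 ∈ D := by
  intro p hp
  simp only [List.mem_map] at hp
  obtain ⟨q, hq, rfl⟩ := hp
  exact h q hq

variable {D' : Set (Set X)}

lemma empty_mem (hD' : IsBoolAlg D') : (∅ : Set X) ∈ D' := by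
  have := hD'.2.1 _ hD'.1
  simpa using this

lemma union_mem (hD' : IsBoolAlg D') {s t : Set X} (hs : s ∈ D') (ht : t ∈ D') :
    s ∪ t ∈ D' := by
  have h := hD'.2.1 _ (hD'.2.2 _ (hD'.2.1 _ hs) _ (hD'.2.1 _ ht))
  simpa [Set.compl_inter] using h

lemma measure_empty (hD' : IsBoolAlg D') (μ : FAM X D') : μ.val ∅ = 0 := by
  have h := μ.additive ∅ ∅ (empty_mem hD') (empty_mem hD') (by simp)
  simp at h
  linarith

lemma measure_split (hD' : IsBoolAlg D') (μ : FAM X D') {A : Set X} (hA : A ∈ D')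
    {s : Set X} (hs : s ∈ D') : μ.val A = μ.val (A ∩ s) + μ.val (A ∩ sᶜ) := by
  have h1 : A ∩ s ∈ D' := hD'.2.2 _ hA _ hs
  have h2 : A ∩ sᶜ ∈ D' := hD'.2.2 _ hA _ (hD'.2.1 _ hs)
  have hdis : Disjoint (A ∩ s) (A ∩ sᶜ) := by
    apply Set.disjoint_left.mpr
    rintro x ⟨-, hx⟩ ⟨-, hx'⟩
    exact hx' hx
  have hu : (A ∩ s) ∪ (A ∩ sᶜ) = A := by
    rw [← Set.inter_union_distrib_left]
    simp
  have := μ.additive _ _ h1 h2 hdis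
  rw [hu] at this
  exact this

lemma measure_mono (hD' : IsBoolAlg D') (μ : FAM X D') {s t : Set X} (hs : s ∈ D')
    (ht : t ∈ D') (hst : s ⊆ t) : μ.val s ≤ μ.val t := by
  have h := measure_split hD' μ ht hs
  have h2 : t ∩ s = s := Set.inter_eq_self_of_subset_right hst
  rw [h2] at h
  have h3 : 0 ≤ μ.val (t ∩ sᶜ) := μ.nonneg _ (hD'.2.2 _ ht _ (hD'.2.1 _ hs))
  linarith


lemma map_sum_split {P : Type*} (l : List P) (f g h : P → ℝ)
    (hfgh : ∀ p ∈ l, f p = g p + h p) :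
    (l.map f).sum = (l.map g).sum + (l.map h).sum := by
  induction l with
  | nil => simp
  | cons p l ih =>
    simp only [List.map_cons, List.sum_cons]
    rw [ih (fun q hq => hfgh q (List.mem_cons_of_mem _ hq)), hfgh p (List.mem_cons_self)]
    ring

lemma lemA (hD' : IsBoolAlg D') (μ : FAM X D') :
    ∀ l : List (Set X × ℝ), (∀ p ∈ l, p.1 ∈ D') → ∀ t ∈ D', ∀ r : ℝ,
      (∀ x ∈ t, lfun l x ≤ r) → lvalt μ.val t l ≤ r * μ.val t := by
  intro l
  induction l with
  | nil =>
    intro _ t ht r hr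
    rcases Set.eq_empty_or_nonempty t with rfl | ⟨x, hx⟩
    · simp [measure_empty hD' μ]
    · have h0 : (0:ℝ) ≤ r := by simpa using hr x hx
      simpa using mul_nonneg h0 (μ.nonneg t ht)
  | cons p l ih =>
    intro hmem t ht r hr
    obtain ⟨s, c⟩ := p
    have hs : s ∈ D' := hmem (s, c) (List.mem_cons_self)
    have hmem' : ∀ q ∈ l, q.1 ∈ D' := fun q hq => hmem q (List.mem_cons_of_mem _ hq)
    have ht₁ : t ∩ s ∈ D' := hD'.2.2 _ ht _ hs
    have ht₂ : t ∩ sᶜ ∈ D' := hD'.2.2 _ ht _ (hD'.2.1 _ hs)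
    have ih₁ : lvalt μ.val (t ∩ s) l ≤ (r - c) * μ.val (t ∩ s) := by
      apply ih hmem' _ ht₁
      rintro x ⟨hxt, hxs⟩
      have := hr x hxt
      rw [lfun_cons] at this
      rw [ind_of_mem hxs] at this
      simp at this
      linarith
    have ih₂ : lvalt μ.val (t ∩ sᶜ) l ≤ r * μ.val (t ∩ sᶜ) := by
      apply ih hmem' _ ht₂
      rintro x ⟨hxt, hxs⟩
      have := hr x hxt
      rw [lfun_cons] at this
      rw [ind_of_not_mem hxs] at this
      simpa using this
    have hsplit : ∀ q ∈ l, μ.val (q.1 ∩ t) = μ.val (q.1 ∩ (t ∩ s)) + μ.val (q.1 ∩ (t ∩ sᶜ)) := by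
      intro q hq
      have := measure_split hD' μ (hD'.2.2 _ (hmem' q hq) _ ht) hs
      rw [Set.inter_assoc, Set.inter_assoc] at this
      exact this
    have hlv : lvalt μ.val t l = lvalt μ.val (t ∩ s) l + lvalt μ.val (t ∩ sᶜ) l := by
      unfold lvalt
      apply map_sum_split
      intro q hq
      rw [hsplit q hq]
      ring
    have hts : μ.val t = μ.val (t ∩ s) + μ.val (t ∩ sᶜ) := measure_split hD' μ ht hs
    have hcs : μ.val (s ∩ t) = μ.val (t ∩ s) := by rw [Set.inter_comm]
    rw [lvalt_cons, hlv, hcs, hts]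
    have hnn : 0 ≤ μ.val (t ∩ s) := μ.nonneg _ ht₁
    nlinarith [ih₁, ih₂]

lemma lemA' (hD' : IsBoolAlg D') (μ : FAM X D') (l : List (Set X × ℝ))
    (hl : ∀ p ∈ l, p.1 ∈ D') (r : ℝ) (hr : ∀ x, lfun l x ≤ r) : lval μ.val l ≤ r := by
  have h := lemA hD' μ l hl Set.univ hD'.1 r (fun x _ => hr x)
  rw [μ.isProb, mul_one] at h
  have he : lvalt μ.val Set.univ l = lval μ.val l := by
    unfold lvalt lval
    congr 1
    apply List.map_congr_left
    intro p _
    rw [Set.inter_univ]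
  rwa [he] at h

lemma lemB (hD' : IsBoolAlg D') (μ : FAM X D') (l : List (Set X × ℝ))
    (hl : ∀ p ∈ l, p.1 ∈ D') (r : ℝ) (hr : ∀ x, r ≤ lfun l x) : r ≤ lval μ.val l := by
  have h := lemA' hD' μ (l.map fun p => (p.1, -p.2)) (mem_neg_list hl) (-r) ?_
  · rw [lval_neg] at h; linarith
  · intro x
    rw [lfun_neg]
    have := hr x
    linarith

lemma levelD (hD : IsBoolAlg D') :
    ∀ l : List (Set X × ℝ), (∀ p ∈ l, p.1 ∈ D') → ∀ r : ℝ, {x | r ≤ lfun l x} ∈ D' := by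
  intro l
  induction l with
  | nil =>
    intro _ r
    rcases le_or_gt r 0 with h | h
    · have : {x : X | r ≤ lfun ([] : List (Set X × ℝ)) x} = Set.univ := by
        ext x; simp [h]
      rw [this]; exact hD.1
    · have : {x : X | r ≤ lfun ([] : List (Set X × ℝ)) x} = ∅ := by
        ext x; simp; linarith
      rw [this]; exact empty_mem hD
  | cons p l ih =>
    intro hmem r
    obtain ⟨s, c⟩ := p
    have hs : s ∈ D' := hmem (s, c) (List.mem_cons_self)
    have hmem' : ∀ q ∈ l, q.1 ∈ D' := fun q hq => hmem q (List.mem_cons_of_mem _ hq)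
    have heq : {x | r ≤ lfun ((s, c) :: l) x} =
        (s ∩ {x | r - c ≤ lfun l x}) ∪ (sᶜ ∩ {x | r ≤ lfun l x}) := by
      ext x
      by_cases hx : x ∈ s
      · simp only [Set.mem_setOf_eq, lfun_cons, Set.mem_union, Set.mem_inter_iff,
          Set.mem_compl_iff, hx, ind_of_mem hx, not_true_eq_false, false_and, or_false,
          true_and]
        constructor <;> intro h <;> [skip; skip] <;> simp at h ⊢ <;> linarith
      · simp only [Set.mem_setOf_eq, lfun_cons, Set.mem_union, Set.mem_inter_iff,
          Set.mem_compl_iff, hx, ind_of_not_mem hx, not_false_eq_true, true_and,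
          false_and, false_or]
        constructor <;> intro h <;> simp at h ⊢ <;> linarith
    rw [heq]
    exact union_mem hD (hD.2.2 _ hs _ (ih hmem' (r - c)))
      (hD.2.2 _ (hD.2.1 _ hs) _ (ih hmem' r))


section HB

variable {D D' : Set (Set X)}

/-- The set of values of covers of `g` by `D`-sets plus a multiple of `s` priced at `v`. -/
def Qset (μv : Set X → ℝ) (D : Set (Set X)) (s : Set X) (v : ℝ) (g : X → ℝ) : Set ℝ :=
  {r | ∃ (l : List (Set X × ℝ)) (c : ℝ), (∀ p ∈ l, p.1 ∈ D) ∧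
    (∀ x, g x ≤ lfun l x + c * ind s x) ∧ r = lval μv l + c * v}

/-- Core positivity: a nonnegative combination has nonnegative priced value. -/
lemma pos_core (hD : IsBoolAlg D) (hD' : IsBoolAlg D') (hsub : D ⊆ D') (μ : FAM X D')
    (s : Set X) (v : ℝ)
    (hv₁ : ∀ u, u ∈ D → s ⊆ u → v ≤ μ.val u)
    (hv₂ : ∀ δ : ℝ, 0 < δ → ∃ u, u ∈ D ∧ s ⊆ u ∧ μ.val u < v + δ)
    (l : List (Set X × ℝ)) (c : ℝ) (hl : ∀ p ∈ l, p.1 ∈ D)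
    (hpt : ∀ x, 0 ≤ lfun l x + c * ind s x) :
    0 ≤ lval μ.val l + c * v := by
  have hl' : ∀ p ∈ l, p.1 ∈ D' := fun p hp => hsub (hl p hp)
  rcases lt_or_ge c 0 with hc | hc
  · -- c < 0 : use a level set
    set u₀ : Set X := {x | -c ≤ lfun l x} with hu₀
    have hu₀D : u₀ ∈ D := levelD hD l hl (-c)
    have hsu : s ⊆ u₀ := by
      intro x hx
      have := hpt x
      rw [ind_of_mem hx] at this
      simp only [hu₀, Set.mem_setOf_eq]
      linarith
    have hkey : 0 ≤ lval μ.val ((u₀, c) :: l) := by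
      apply lemB hD' μ _ ?_ 0
      · intro x
        rw [lfun_cons]
        by_cases hx : x ∈ u₀
        · rw [ind_of_mem hx]
          have : -c ≤ lfun l x := hx
          linarith
        · rw [ind_of_not_mem hx]
          have hxs : x ∉ s := fun h => hx (hsu h)
          have := hpt x
          rw [ind_of_not_mem hxs] at this
          simp at this ⊢
          linarith
      · rintro p hp
        rcases List.mem_cons.mp hp with rfl | hp'
        · exact hsub hu₀D
        · exact hl' p hp'
    rw [lval_cons] at hkey
    have hv : v ≤ μ.val u₀ := hv₁ u₀ hu₀D hsu
    nlinarith
  · -- 0 ≤ c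
    have hkey : ∀ u, u ∈ D → s ⊆ u → 0 ≤ lval μ.val l + c * μ.val u := by
      intro u huD hsu
      have h := lemB hD' μ ((u, c) :: l) ?_ 0 ?_
      · rw [lval_cons] at h; linarith
      · rintro p hp
        rcases List.mem_cons.mp hp with rfl | hp'
        · exact hsub huD
        · exact hl' p hp'
      · intro x
        rw [lfun_cons]
        have h1 : c * ind s x ≤ c * ind u x := mul_le_mul_of_nonneg_left (ind_mono hsu x) hc
        have := hpt x
        linarith
    by_contra hcon
    push_neg at hcon
    rcases eq_or_lt_of_le hc with rfl | hcpos
    · obtain ⟨u, huD, hsu, _⟩ := hv₂ 1 one_pos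
      have := hkey u huD hsu
      simp at this hcon
      linarith
    · set δ : ℝ := -(lval μ.val l + c * v) / c with hδ
      have hδpos : 0 < δ := div_pos (by linarith) hcpos
      obtain ⟨u, huD, hsu, hu⟩ := hv₂ δ hδpos
      have h1 := hkey u huD hsu
      have h2 : c * μ.val u < c * (v + δ) := by
        exact mul_lt_mul_of_pos_left hu hcpos
      have h3 : c * (v + δ) = c * v - (lval μ.val l + c * v) := by
        rw [hδ]
        field_simp
        ring
      nlinarith

variable (μ : FAM X D')

lemma Qset_nonempty (hD : IsBoolAlg D) {g : X → ℝ} {C : ℝ} (hg : ∀ x, |g x| ≤ C)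
    {s : Set X} {v : ℝ} : (Qset μ.val D s v g).Nonempty := by
  refine ⟨lval μ.val [(Set.univ, C)] + 0 * v, [(Set.univ, C)], 0, ?_, ?_, rfl⟩
  · rintro p hp
    rcases List.mem_cons.mp hp with rfl | hp'
    · exact hD.1
    · simp at hp'
  · intro x
    have := (abs_le.mp (hg x)).2
    simp [ind_of_mem (Set.mem_univ x)]
    linarith

lemma Qset_bddBelow (hD : IsBoolAlg D) (hD' : IsBoolAlg D') (hsub : D ⊆ D')
    (s : Set X) (v : ℝ)
    (hv₁ : ∀ u, u ∈ D → s ⊆ u → v ≤ μ.val u)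
    (hv₂ : ∀ δ : ℝ, 0 < δ → ∃ u, u ∈ D ∧ s ⊆ u ∧ μ.val u < v + δ)
    {g : X → ℝ} {C : ℝ} (hg : ∀ x, |g x| ≤ C) :
    BddBelow (Qset μ.val D s v g) := by
  refine ⟨-C, ?_⟩
  rintro r ⟨l, c, hl, hpt, rfl⟩
  have h := pos_core hD hD' hsub μ s v hv₁ hv₂ ((Set.univ, C) :: l) c ?_ ?_
  · rw [lval_cons] at h
    rw [μ.isProb] at h
    linarith
  · rintro p hp
    rcases List.mem_cons.mp hp with rfl | hp'
    · exact hD.1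
    · exact hl p hp'
  · intro x
    rw [lfun_cons, ind_of_mem (Set.mem_univ x)]
    have h1 := (abs_le.mp (hg x)).1
    have h2 := hpt x
    simp only [mul_one]
    linarith

end HB


section Outer

variable {D D' : Set (Set X)}

/-- The submodule of bounded real functions. -/
def BddSub (X : Type u) : Submodule ℝ (X → ℝ) where
  carrier := {g | ∃ C : ℝ, ∀ x, |g x| ≤ C}
  add_mem' := by
    rintro f g ⟨Cf, hf⟩ ⟨Cg, hg⟩
    exact ⟨Cf + Cg, fun x => le_trans (abs_add_le _ _) (add_le_add (hf x) (hg x))⟩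
  zero_mem' := ⟨0, fun x => by simp⟩
  smul_mem' := by
    rintro c f ⟨C, hf⟩
    refine ⟨|c| * C, fun x => ?_⟩
    have : |c * f x| = |c| * |f x| := abs_mul c (f x)
    simp only [Pi.smul_apply, smul_eq_mul]
    rw [this]
    exact mul_le_mul_of_nonneg_left (hf x) (abs_nonneg c)

/-- The indicator function as an element of `BddSub X`. -/
noncomputable def indE (t : Set X) : ↥(BddSub X) :=
  ⟨ind t, ⟨1, fun x => by unfold ind; split <;> norm_num⟩⟩

/-- Key lemma: if a finitely additive probability measure on `D'` has a unique
restriction-determined value (via `huniq`) then its value on any `s ∈ D'` is at least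
the `D`-outer value can be approximated: there is `u ∈ D` containing `s` with measure
close to that of `s`. -/
lemma abstract_approx (hD : IsBoolAlg D) (hD' : IsBoolAlg D') (hsub : D ⊆ D')
    (μ : FAM X D')
    (huniq : ∀ ν : FAM X D', agreeOn D ν.val μ.val → agreeOn D' ν.val μ.val)
    (s : Set X) (hs : s ∈ D') {ε : ℝ} (hε : 0 < ε) :
    ∃ u, u ∈ D ∧ s ⊆ u ∧ μ.val u < μ.val s + ε := by
  classical
  set Ms : Set ℝ := {r | ∃ u, u ∈ D ∧ s ⊆ u ∧ μ.val u = r} with hMs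
  have hne : Ms.Nonempty := ⟨μ.val Set.univ, Set.univ, hD.1, Set.subset_univ s, rfl⟩
  have hbb : BddBelow Ms := by
    refine ⟨0, ?_⟩
    rintro r ⟨u, hu, -, rfl⟩
    exact μ.nonneg u (hsub hu)
  set v : ℝ := sInf Ms with hvdef
  have hv₁ : ∀ u, u ∈ D → s ⊆ u → v ≤ μ.val u := fun u hu hsu =>
    csInf_le hbb ⟨u, hu, hsu, rfl⟩
  have hv₂ : ∀ δ : ℝ, 0 < δ → ∃ u, u ∈ D ∧ s ⊆ u ∧ μ.val u < v + δ := by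
    intro δ hδ
    obtain ⟨r, ⟨u, hu, hsu, rfl⟩, hlt⟩ := exists_lt_of_csInf_lt hne
      (show v < v + δ by linarith)
    exact ⟨u, hu, hsu, hlt⟩
  -- main claim : v ≤ μ.val s
  suffices hvs : v ≤ μ.val s by
    obtain ⟨r, ⟨u, hu, hsu, rfl⟩, hlt⟩ := exists_lt_of_csInf_lt hne
      (show v < μ.val s + ε by linarith)
    exact ⟨u, hu, hsu, hlt⟩
  -- Hahn–Banach construction
  set q : (X → ℝ) → ℝ := fun g => sInf (Qset μ.val D s v g) with hqdef
  have hq_le : ∀ (g : X → ℝ) (C : ℝ), (∀ x, |g x| ≤ C) →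
      ∀ r ∈ Qset μ.val D s v g, q g ≤ r := by
    intro g C hg r hr
    exact csInf_le (Qset_bddBelow μ hD hD' hsub s v hv₁ hv₂ hg) hr
  have hq_pos : ∀ r ∈ Qset μ.val D s v (0 : X → ℝ), (0:ℝ) ≤ r := by
    rintro r ⟨l, c, hl, hpt, rfl⟩
    apply pos_core hD hD' hsub μ s v hv₁ hv₂ l c hl
    intro x
    have := hpt x
    simpa using this
  have hq0 : (0:ℝ) ≤ q (0 : X → ℝ) :=
    le_csInf (Qset_nonempty μ hD (C := 0) (fun x => by simp)) hq_pos
  -- scaling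
  have hsmul : ∀ (c : ℝ), 0 < c → ∀ (g : X → ℝ) (C : ℝ), (∀ x, |g x| ≤ C) →
      q (fun y => c * g y) ≤ c * q g := by
    intro c hc g C hg
    have hgc : ∀ x, |c * g x| ≤ c * C := by
      intro x
      rw [abs_mul, abs_of_pos hc]
      exact mul_le_mul_of_nonneg_left (hg x) hc.le
    have h1 : ∀ r ∈ Qset μ.val D s v g, q (fun y => c * g y) ≤ c * r := by
      rintro r ⟨l, c₀, hl, hpt, rfl⟩
      apply hq_le _ (c * C) hgc
      refine ⟨l.map fun p => (p.1, c * p.2), c * c₀, ?_, ?_, ?_⟩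
      · rintro p hp
        simp only [List.mem_map] at hp
        obtain ⟨pq, hpq, rfl⟩ := hp
        exact hl pq hpq
      · intro x
        rw [lfun_smul]
        show c * g x ≤ c * lfun l x + c * c₀ * ind s x
        have := hpt x
        nlinarith [mul_le_mul_of_nonneg_left this hc.le]
      · rw [lval_smul]
        ring
    have h2 : q (fun y => c * g y) / c ≤ q g := by
      apply le_csInf (Qset_nonempty μ hD hg)
      intro r hr
      rw [div_le_iff₀ hc]
      calc q (fun y => c * g y) ≤ c * r := h1 r hr
        _ = r * c := by ring
    calc q (fun y => c * g y) = q (fun y => c * g y) / c * c := by field_simp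
      _ ≤ q g * c := mul_le_mul_of_nonneg_right h2 hc.le
      _ = c * q g := by ring
  set E := ↥(BddSub X) with hEdef
  set N : E → ℝ := fun g => q (g : X → ℝ) with hNdef
  have N_hom : ∀ c : ℝ, 0 < c → ∀ x : E, N (c • x) = c * N x := by
    intro c hc x
    obtain ⟨C, hC⟩ := x.2
    have hcoe : ((c • x : E) : X → ℝ) = fun y => c * (x : X → ℝ) y := rfl
    have h1 : N (c • x) ≤ c * N x := by
      simp only [hNdef]
      rw [hcoe]
      exact hsmul c hc _ C hC
    have hgc : ∀ y, |c * (x : X → ℝ) y| ≤ c * C := by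
      intro y
      rw [abs_mul, abs_of_pos hc]
      exact mul_le_mul_of_nonneg_left (hC y) hc.le
    have h2 : q ((x : X → ℝ)) ≤ c⁻¹ * q (fun y => c * (x : X → ℝ) y) := by
      have := hsmul c⁻¹ (inv_pos.mpr hc) (fun y => c * (x : X → ℝ) y) (c * C) hgc
      have heq : (fun y => c⁻¹ * (c * (x : X → ℝ) y)) = (x : X → ℝ) := by
        ext y
        rw [inv_mul_cancel_left₀ hc.ne']
      rwa [heq] at this
    have h3 : c * N x ≤ N (c • x) := by
      simp only [hNdef]
      rw [hcoe]
      have := mul_le_mul_of_nonneg_left h2 hc.le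
      rwa [← mul_assoc, mul_inv_cancel₀ hc.ne', one_mul] at this
    linarith
  have N_add : ∀ x y : E, N (x + y) ≤ N x + N y := by
    intro x y
    obtain ⟨Cx, hCx⟩ := x.2
    obtain ⟨Cy, hCy⟩ := y.2
    have hcoe : ((x + y : E) : X → ℝ) = fun z => (x : X → ℝ) z + (y : X → ℝ) z := rfl
    have hbxy : ∀ z, |(x : X → ℝ) z + (y : X → ℝ) z| ≤ Cx + Cy := fun z =>
      le_trans (abs_add_le _ _) (add_le_add (hCx z) (hCy z))
    have hadd : ∀ r₁ ∈ Qset μ.val D s v (x : X → ℝ), ∀ r₂ ∈ Qset μ.val D s v (y : X → ℝ),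
        q (fun z => (x : X → ℝ) z + (y : X → ℝ) z) ≤ r₁ + r₂ := by
      rintro r₁ ⟨l₁, c₁, hl₁, hpt₁, rfl⟩ r₂ ⟨l₂, c₂, hl₂, hpt₂, rfl⟩
      apply hq_le _ (Cx + Cy) hbxy
      refine ⟨l₁ ++ l₂, c₁ + c₂, ?_, ?_, ?_⟩
      · intro p hp
        rcases List.mem_append.mp hp with h | h
        · exact hl₁ p h
        · exact hl₂ p h
      · intro z
        rw [lfun_append]
        show (x : X → ℝ) z + (y : X → ℝ) z ≤ lfun l₁ z + lfun l₂ z + (c₁ + c₂) * ind s z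
        have h1 := hpt₁ z
        have h2 := hpt₂ z
        nlinarith [h1, h2]
      · rw [lval_append]
        ring
    have h1 : ∀ r₂ ∈ Qset μ.val D s v (y : X → ℝ),
        q (fun z => (x : X → ℝ) z + (y : X → ℝ) z) - r₂ ≤ q (x : X → ℝ) := by
      intro r₂ h2
      apply le_csInf (Qset_nonempty μ hD hCx)
      intro r₁ h1
      linarith [hadd r₁ h1 r₂ h2]
    have h2 : q (fun z => (x : X → ℝ) z + (y : X → ℝ) z) - q (x : X → ℝ) ≤
        q (y : X → ℝ) := by
      apply le_csInf (Qset_nonempty μ hD hCy)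
      intro r₂ h2
      linarith [h1 r₂ h2]
    simp only [hNdef]
    rw [hcoe]
    linarith
  have hf : ∀ z : ((0 : E →ₗ[ℝ] ℝ).toPMap ⊥).domain,
      ((0 : E →ₗ[ℝ] ℝ).toPMap ⊥) z ≤ N z := by
    intro z
    have hz : (z : E) = 0 := (Submodule.mem_bot ℝ).mp z.2
    show (0 : E →ₗ[ℝ] ℝ) (z : E) ≤ N z
    simp only [LinearMap.zero_apply]
    rw [hz]
    simp only [hNdef]
    have : ((0 : E) : X → ℝ) = (0 : X → ℝ) := rfl
    rw [this]
    exact hq0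
  obtain ⟨I, hI0, hIle⟩ := exists_extension_of_le_sublinear
    ((0 : E →ₗ[ℝ] ℝ).toPMap ⊥) N N_hom N_add hf
  -- properties of ν t := I (indE t)
  have hind_bdd : ∀ t : Set X, ∀ x, |ind t x| ≤ (1:ℝ) := by
    intro t x
    unfold ind; split <;> norm_num
  have hcoe_neg : ∀ t : Set X, ((-(indE t) : E) : X → ℝ) = fun x => -(ind t x) := by
    intro t; ext x; simp [indE]
  have hneg_bdd : ∀ t : Set X, ∀ x, |(-(ind t x) : ℝ)| ≤ (1:ℝ) := by
    intro t x
    rw [abs_neg]; exact hind_bdd t x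
  have hInn : ∀ t : Set X, 0 ≤ I (indE t) := by
    intro t
    have h := hIle (-(indE t))
    rw [map_neg] at h
    have h2 : N (-(indE t)) ≤ 0 := by
      simp only [hNdef]
      rw [hcoe_neg]
      apply hq_le _ 1 (hneg_bdd t)
      refine ⟨[], 0, by simp, ?_, by simp⟩
      intro x
      have := ind_nonneg t x
      simp
      linarith
    linarith
  have hIofD : ∀ t, t ∈ D → I (indE t) = μ.val t := by
    intro t ht
    have hle : I (indE t) ≤ μ.val t := by
      have h := hIle (indE t)
      have h2 : N (indE t) ≤ μ.val t := by
        simp only [hNdef]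
        have hcoet : ((indE t : E) : X → ℝ) = ind t := rfl
        rw [hcoet]
        apply hq_le _ 1 (hind_bdd t)
        refine ⟨[(t, 1)], 0, ?_, ?_, by simp⟩
        · rintro p hp
          rcases List.mem_cons.mp hp with rfl | hp'
          · exact ht
          · simp at hp'
        · intro x; simp
      linarith
    have hge : μ.val t ≤ I (indE t) := by
      have h := hIle (-(indE t))
      rw [map_neg] at h
      have h2 : N (-(indE t)) ≤ -μ.val t := by
        simp only [hNdef]
        rw [hcoe_neg]
        apply hq_le _ 1 (hneg_bdd t)
        refine ⟨[(t, -1)], 0, ?_, ?_, by simp⟩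
        · rintro p hp
          rcases List.mem_cons.mp hp with rfl | hp'
          · exact ht
          · simp at hp'
        · intro x; simp
      linarith
    linarith
  have hIs : v ≤ I (indE s) := by
    have h := hIle (-(indE s))
    rw [map_neg] at h
    have h2 : N (-(indE s)) ≤ -v := by
      simp only [hNdef]
      rw [hcoe_neg]
      apply hq_le _ 1 (hneg_bdd s)
      refine ⟨[], -1, by simp, ?_, by simp⟩
      intro x; simp
    linarith
  -- build the extension FAM
  set ν : FAM X D' :=
    { val := fun t => I (indE t)
      nonneg := fun t _ => hInn t
      isProb := by
        show I (indE Set.univ) = 1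
        rw [hIofD Set.univ hD.1]
        exact μ.isProb
      additive := by
        intro a b _ _ hd
        have heq : indE (a ∪ b) = indE a + indE b := by
          apply Subtype.ext
          show ind (a ∪ b) = ind a + ind b
          funext x
          by_cases hxa : x ∈ a
          · have hxb : x ∉ b := fun hxb => Set.disjoint_left.mp hd hxa hxb
            simp [ind_of_mem (Set.mem_union_left b hxa), Pi.add_apply,
              ind_of_mem hxa, ind_of_not_mem hxb]
          · by_cases hxb : x ∈ b
            · simp [ind_of_mem (Set.mem_union_right a hxb), Pi.add_apply,
                ind_of_not_mem hxa, ind_of_mem hxb]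
            · have : x ∉ a ∪ b := by
                rintro (h | h) <;> [exact hxa h; exact hxb h]
              simp [ind_of_not_mem this, Pi.add_apply, ind_of_not_mem hxa,
                ind_of_not_mem hxb]
        show I (indE (a ∪ b)) = I (indE a) + I (indE b)
        rw [heq, map_add] } with hν
  have hagree : agreeOn D ν.val μ.val := fun t ht => hIofD t ht
  have := huniq ν hagree s hs
  show v ≤ μ.val s
  rw [← this]
  exact hIs

end Outer

end Abstract

section MT

variable {L : FirstOrder.Language.{u, u}} {U : Type u} [L.Structure U]

/-- Realization of a formula depends only on the free variables. -/
lemma realize_agree {β : Type u} [DecidableEq β] (φ : L.Formula β) {v v' : β → U}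
    (h : ∀ x ∈ φ.freeVarFinset, v x = v' x) : φ.Realize v ↔ φ.Realize v' := by
  have h1 := BoundedFormula.realize_restrictFreeVar' (L := L) (M := U) (φ := φ)
    (s := (↑φ.freeVarFinset : Set β)) (subset_refl _) (v := v) (xs := default)
  have h2 := BoundedFormula.realize_restrictFreeVar' (L := L) (M := U) (φ := φ)
    (s := (↑φ.freeVarFinset : Set β)) (subset_refl _) (v := v') (xs := default)
  have he : v ∘ ((↑) : {x // x ∈ (↑φ.freeVarFinset : Set β)} → β) = v' ∘ (↑) := by
    funext x
    exact h x.1 (by exact_mod_cast x.2)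
  show BoundedFormula.Realize φ v default ↔ BoundedFormula.Realize φ v' default
  rw [← h1, ← h2, he]

/-- Coding of a finite set of variables into `Fin k`, with a lifting of assignments. -/
lemma exists_code {α : Type u} (F : Finset α) (u0 : U) :
    ∃ (k : ℕ) (gα : α → Fin k) (lift : (α → U) → Fin k → U),
      ∀ (a : α → U) (x : α), x ∈ F → lift a (gα x) = a x := by
  refine ⟨F.card + 1,
    fun x => if h : x ∈ F then (F.equivFin ⟨x, h⟩).castSucc else Fin.last F.card,
    fun a i => if h : (i : ℕ) < F.card then a ((F.equivFin.symm ⟨(i : ℕ), h⟩) : α) else u0, ?_⟩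
  intro a x hx
  simp only [dif_pos hx]
  have hlt : (((F.equivFin ⟨x, hx⟩).castSucc : Fin (F.card + 1)) : ℕ) < F.card := by
    simpa using (F.equivFin ⟨x, hx⟩).2
  rw [dif_pos hlt]
  have hfin : (⟨(((F.equivFin ⟨x, hx⟩).castSucc : Fin (F.card + 1)) : ℕ), hlt⟩ : Fin F.card)
      = F.equivFin ⟨x, hx⟩ := by
    apply Fin.ext
    simp
  rw [hfin, Equiv.symm_apply_apply]

/-- Extension of a `k`-tuple by one element. -/
def ext1 {k : ℕ} (w : Fin k → U) (u : U) : Fin (k + 1) → U :=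
  fun i => if h : (i : ℕ) < k then w ⟨i, h⟩ else u

lemma ext1_self {k : ℕ} (w : Fin (k + 1) → U) :
    ext1 (w ∘ Fin.castSucc) (w (Fin.last k)) = w := by
  funext i
  unfold ext1
  by_cases h : (i : ℕ) < k
  · rw [dif_pos h]
    have hcs : Fin.castSucc ⟨(i : ℕ), h⟩ = i := by apply Fin.ext; simp
    simp only [Function.comp_apply, hcs]
  · rw [dif_neg h]
    have hi : i = Fin.last k := by
      apply Fin.ext
      have := i.isLt
      simp only [Fin.val_last]
      omega
    rw [hi]

/-- Tarski–Vaught for finitely many variables at once. -/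
lemma finVar {Mset : Set U} (hM : IsElemSubset L U Mset) :
    ∀ (k m : ℕ) (ψ : L.Formula (Fin k ⊕ Fin m)) (b : Fin m → U),
      (∀ j, b j ∈ Mset) → (∃ w : Fin k → U, ψ.Realize (Sum.elim w b)) →
      ∃ w : Fin k → U, (∀ i, w i ∈ Mset) ∧ ψ.Realize (Sum.elim w b) := by
  intro k
  induction k with
  | zero =>
    rintro m ψ b hb ⟨w, hw⟩
    exact ⟨w, fun i => i.elim0, hw⟩
  | succ k ih =>
    rintro m ψ b hb ⟨w, hw⟩
    set f : Fin (k + 1) ⊕ Fin m → (Fin k ⊕ Fin m) ⊕ Fin 1 :=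
      Sum.elim (fun i => if h : (i : ℕ) < k then Sum.inl (Sum.inl ⟨i, h⟩) else Sum.inr 0)
        (fun j => Sum.inl (Sum.inr j)) with hf
    set χ : L.Formula (Fin k ⊕ Fin m) := (ψ.relabel f).iExs (Fin 1) with hχ
    have hval : ∀ (w₀ : Fin k → U) (w1 : Fin 1 → U),
        Sum.elim (Sum.elim w₀ b) w1 ∘ f = Sum.elim (ext1 w₀ (w1 0)) b := by
      intro w₀ w1
      funext a
      rcases a with i | j
      · by_cases h : (i : ℕ) < k
        · simp [hf, ext1, dif_pos h]
        · simp [hf, ext1, dif_neg h]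
      · simp [hf]
    have hχr : ∀ w₀ : Fin k → U, χ.Realize (Sum.elim w₀ b) ↔
        ∃ u : U, ψ.Realize (Sum.elim (ext1 w₀ u) b) := by
      intro w₀
      rw [hχ, Formula.realize_iExs]
      simp only [Formula.realize_relabel]
      constructor
      · rintro ⟨w1, h1⟩
        exact ⟨w1 0, by rwa [hval w₀ w1] at h1⟩
      · rintro ⟨u, hu⟩
        exact ⟨fun _ => u, by rw [hval w₀ (fun _ => u)]; exact hu⟩
    have hw₀ : χ.Realize (Sum.elim (w ∘ Fin.castSucc) b) := by
      rw [hχr]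
      exact ⟨w (Fin.last k), by rwa [ext1_self]⟩
    obtain ⟨w₁, hw₁M, hw₁⟩ := ih m χ b hb ⟨w ∘ Fin.castSucc, hw₀⟩
    set c : Fin (k + m) → U := Fin.addCases w₁ b with hc
    have hcM : ∀ i, c i ∈ Mset := by
      intro i
      refine Fin.addCases (motive := fun i => c i ∈ Mset) ?_ ?_ i
      · intro j
        have : c (Fin.castAdd m j) = w₁ j := by simp [hc]
        rw [this]; exact hw₁M j
      · intro j
        have : c (Fin.natAdd k j) = b j := by simp [hc]
        rw [this]; exact hb j
    set g₂ : Fin (k + 1) ⊕ Fin m → Fin (k + m) ⊕ Fin 1 :=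
      Sum.elim (fun i => if h : (i : ℕ) < k then Sum.inl (Fin.castAdd m ⟨i, h⟩) else Sum.inr 0)
        (fun j => Sum.inl (Fin.natAdd k j)) with hg₂
    set θ : L.Formula (Fin (k + m) ⊕ Fin 1) := ψ.relabel g₂ with hθ
    have hθr : ∀ w1 : Fin 1 → U,
        θ.Realize (Sum.elim c w1) ↔ ψ.Realize (Sum.elim (ext1 w₁ (w1 0)) b) := by
      intro w1
      rw [hθ, Formula.realize_relabel]
      have hcomp : Sum.elim c w1 ∘ g₂ = Sum.elim (ext1 w₁ (w1 0)) b := by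
        funext a
        rcases a with i | j
        · by_cases h : (i : ℕ) < k
          · have h1 : g₂ (Sum.inl i) = Sum.inl (Fin.castAdd m ⟨(i : ℕ), h⟩) := by
              simp [hg₂, dif_pos h]
            have hcl : c (Fin.castAdd m ⟨(i : ℕ), h⟩) = w₁ ⟨(i : ℕ), h⟩ :=
              Fin.addCases_left _
            simp only [Function.comp_apply, h1, Sum.elim_inl, hcl, Sum.elim_inl, ext1]
            rw [dif_pos h]
          · have h1 : g₂ (Sum.inl i) = Sum.inr 0 := by simp [hg₂, dif_neg h]
            simp only [Function.comp_apply, h1, Sum.elim_inr, Sum.elim_inl, ext1]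
            rw [dif_neg h]
        · have h1 : g₂ (Sum.inr j) = Sum.inl (Fin.natAdd k j) := by simp [hg₂]
          have hcr : c (Fin.natAdd k j) = b j := Fin.addCases_right _
          simp only [Function.comp_apply, h1, Sum.elim_inl, hcr, Sum.elim_inr]
      rw [hcomp]
    obtain ⟨u0, hu0⟩ := (hχr w₁).mp hw₁
    obtain ⟨aM, haM, haR⟩ := hM.2 (k + m) θ c hcM ⟨fun _ => u0, (hθr (fun _ => u0)).mpr hu0⟩
    refine ⟨ext1 w₁ (aM 0), ?_, (hθr aM).mp haR⟩
    intro i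
    unfold ext1
    by_cases h : (i : ℕ) < k
    · rw [dif_pos h]; exact hw₁M _
    · rw [dif_neg h]; exact haM 0

/-- The relabeling of a formula along a variable coding. -/
lemma relabel_iff {α : Type u} {n : ℕ} (θ : L.Formula (α ⊕ Fin n)) {k : ℕ} (gα : α → Fin k)
    (w : Fin k → U) (d : Fin n → U) :
    (θ.relabel (Sum.map gα id)).Realize (Sum.elim w d) ↔ θ.Realize (Sum.elim (w ∘ gα) d) := by
  rw [Formula.realize_relabel]
  have : Sum.elim w d ∘ Sum.map gα id = Sum.elim (w ∘ gα) d := by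
    funext a; rcases a with x | j <;> simp
  rw [this]

/-- Every nonempty set in `Δ(M)` contains a tuple from `M`. -/
lemma delta_mem_point {α : Type u} {Δ : ∀ m : ℕ, Set (L.Formula (α ⊕ Fin m))}
    {Mset : Set U} (hM : IsElemSubset L U Mset) {t : Set (α → U)}
    (ht : t ∈ DeltaSet L Δ Mset) (hne : t.Nonempty) :
    ∃ a ∈ t, ∀ i, a i ∈ Mset := by
  classical
  obtain ⟨m, φ, b, hφ, hb, rfl⟩ := ht
  obtain ⟨a₀, ha₀⟩ := hne
  obtain ⟨u0, hu0⟩ := hM.1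
  set F : Finset α := φ.freeVarFinset.preimage Sum.inl Sum.inl_injective.injOn with hF
  obtain ⟨k, gα, lift, hlift⟩ := exists_code F u0
  have hB : φ.Realize (Sum.elim (lift a₀ ∘ gα) b) := by
    have hiff := realize_agree φ (v := Sum.elim a₀ b) (v' := Sum.elim (lift a₀ ∘ gα) b) ?_
    · exact hiff.mp ha₀
    · intro x hx
      rcases x with xa | j
      · simp only [Sum.elim_inl, Function.comp_apply]
        refine (hlift a₀ xa ?_).symm
        rw [hF, Finset.mem_preimage]
        exact hx
      · simp
  obtain ⟨wM, hwM, hwR⟩ := finVar hM k m (φ.relabel (Sum.map gα id)) b hb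
    ⟨lift a₀, (relabel_iff φ gα _ b).mpr hB⟩
  exact ⟨wM ∘ gα, (relabel_iff φ gα wM b).mp hwR, fun i => hwM (gα i)⟩


/-- The defining formula for part 2: `∀ x (φ(x, y) → χ(x, c))` as an `L[[Mset]]`-formula
in the variables `y`. -/
lemma exists_def_formula {α : Type u} {Mset : Set U} (hMne : Mset.Nonempty)
    {m m' : ℕ} (φ : L.Formula (α ⊕ Fin m)) (χ : L.Formula (α ⊕ Fin m'))
    (c : Fin m' → U) (hc : ∀ j, c j ∈ Mset) :
    ∃ ψ : (L[[Mset]]).Formula (Fin m), ∀ b' : Fin m → U,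
      (ψ.Realize b' ↔ ∀ a : α → U, φ.Realize (Sum.elim a b') → χ.Realize (Sum.elim a c)) := by
  classical
  obtain ⟨u0, -⟩ := hMne
  set F : Finset α := φ.freeVarFinset.preimage Sum.inl Sum.inl_injective.injOn ∪
    χ.freeVarFinset.preimage Sum.inl Sum.inl_injective.injOn with hF
  obtain ⟨k, gα, lift, hlift⟩ := exists_code F u0
  set φk : L.Formula (Fin k ⊕ Fin m) := φ.relabel (Sum.map gα id) with hφk
  set χk : L.Formula (Fin k ⊕ Fin m') := χ.relabel (Sum.map gα id) with hχk
  set φk' : (L[[Mset]]).Formula (Fin k ⊕ Fin m) :=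
    (L.lhomWithConstants Mset).onFormula φk with hφk'
  set χk' : (L[[Mset]]).Formula (Fin k ⊕ Fin m') :=
    (L.lhomWithConstants Mset).onFormula χk with hχk'
  set σ : Fin k ⊕ Fin m' → (L[[Mset]]).Term (Fin k ⊕ Fin m) :=
    Sum.elim (fun i => Term.var (Sum.inl i))
      (fun j => Constants.term (L.con (⟨c j, hc j⟩ : Mset))) with hσ
  set χ₂ : (L[[Mset]]).Formula (Fin k ⊕ Fin m) := χk'.subst σ with hχ₂
  set body : (L[[Mset]]).Formula (Fin k ⊕ Fin m) := φk'.imp χ₂ with hbody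
  refine ⟨(body.relabel (Sum.elim Sum.inr Sum.inl)).iAlls (Fin k), ?_⟩
  intro b'
  have hψ : ((body.relabel (Sum.elim Sum.inr Sum.inl)).iAlls (Fin k)).Realize b' ↔
      ∀ w : Fin k → U, φk.Realize (Sum.elim w b') → χk.Realize (Sum.elim w c) := by
    rw [Formula.realize_iAlls]
    apply forall_congr'
    intro w
    have hval : (fun a => Sum.elim b' w a) ∘ (Sum.elim Sum.inr Sum.inl : Fin k ⊕ Fin m → Fin m ⊕ Fin k) =
        (Sum.elim w b' : Fin k ⊕ Fin m → U) := by
      funext a; rcases a with i | j <;> simp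
    rw [Formula.realize_relabel, hval, hbody, Formula.realize_imp]
    apply imp_congr
    · rw [hφk']
      exact LHom.realize_onFormula _ _
    · rw [hχ₂]
      have hvs : (fun a => (σ a).realize (Sum.elim w b')) =
          (Sum.elim w c : Fin k ⊕ Fin m' → U) := by
        funext a
        rcases a with i | j
        · simp [hσ]
        · simp only [hσ, Sum.elim_inr]
          exact Term.realize_con
      have hsub : Formula.Realize (χk'.subst σ) (Sum.elim w b') ↔ χk'.Realize (Sum.elim w c) := by
        have h := BoundedFormula.realize_subst (M := U) (φ := χk') (tf := σ)
          (v := Sum.elim w b') (xs := (default : Fin 0 → U))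
        rw [hvs] at h
        exact h
      rw [hsub, hχk']
      exact LHom.realize_onFormula _ _
  rw [hψ]
  have hsubφ : φ.freeVarFinset.preimage Sum.inl Sum.inl_injective.injOn ⊆ F :=
    hF ▸ Finset.subset_union_left
  have hsubχ : χ.freeVarFinset.preimage Sum.inl Sum.inl_injective.injOn ⊆ F :=
    hF ▸ Finset.subset_union_right
  have hagree : ∀ (n : ℕ) (θ : L.Formula (α ⊕ Fin n)), θ.freeVarFinset.preimage Sum.inl
      Sum.inl_injective.injOn ⊆ F → ∀ (a : α → U) (d : Fin n → U),
      (θ.Realize (Sum.elim a d) ↔ θ.Realize (Sum.elim (lift a ∘ gα) d)) := by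
    intro n θ hn a d
    apply realize_agree
    intro x hx
    rcases x with xa | j
    · simp only [Sum.elim_inl, Function.comp_apply]
      refine (hlift a xa (hn ?_)).symm
      rw [Finset.mem_preimage]
      exact hx
    · simp
  constructor
  · intro hL a hφa
    have h1 : φk.Realize (Sum.elim (lift a) b') :=
      (relabel_iff φ gα (lift a) b').mpr ((hagree m φ hsubφ a b').mp hφa)
    have h2 := hL (lift a) h1
    have h3 : χ.Realize (Sum.elim (lift a ∘ gα) c) := (relabel_iff χ gα (lift a) c).mp h2
    exact (hagree m' χ hsubχ a c).mpr h3
  · intro hR w h1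
    have h2 : φ.Realize (Sum.elim (w ∘ gα) b') := (relabel_iff φ gα w b').mp h1
    have h3 := hR (w ∘ gα) h2
    exact (relabel_iff χ gα w c).mpr h3

end MT

/-- A global `Δ`-measure smooth over a small model `M` is generically
stable over `M`: it is finitely satisfiable in `M`, and `M`-definable (for every
`φ(x; y) ∈ Δ` and `r`, the set `{b : μ(φ(x; b)) < r}` is open in the `M`-logic
topology). -/
theorem statement_14
    (L : FirstOrder.Language.{u, u}) (U : Type u) [L.Structure U]
    (κ : Cardinal.{u}) (hMon : IsMonster L U κ)
    (α : Type u) (Δ : ∀ m : ℕ, Set (L.Formula (α ⊕ Fin m)))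
    (halg : ∀ A : Set U, IsBoolAlg (DeltaSet L Δ A))
    (Mset : Set U) (hM : IsElemSubset L U Mset) (hMsmall : SmallSet L κ Mset)
    (μ : FAM (α → U) (DeltaSet L Δ (Set.univ : Set U)))
    (hsm : SmoothOn (DeltaSet L Δ Mset) (DeltaSet L Δ (Set.univ : Set U)) μ.val) :
    FinSatIn (DeltaSet L Δ (Set.univ : Set U)) μ.val Mset ∧
      ∀ m : ℕ, ∀ φ ∈ Δ m, ∀ r : ℝ, ∀ b : Fin m → U, μ.val (defFam φ b) < r →
        ∃ ψ : (L[[Mset]]).Formula (Fin m), ψ.Realize b ∧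
          ∀ b' : Fin m → U, ψ.Realize b' → μ.val (defFam φ b') < r := by
  classical
  have hDalg := halg Mset
  have hD'alg := halg (Set.univ : Set U)
  have hsub : DeltaSet L Δ Mset ⊆ DeltaSet L Δ (Set.univ : Set U) := by
    rintro s ⟨m, φ, b, hφ, hb, rfl⟩
    exact ⟨m, φ, b, hφ, fun j => trivial, rfl⟩
  have huniq : ∀ ν : FAM (α → U) (DeltaSet L Δ (Set.univ : Set U)),
      agreeOn (DeltaSet L Δ Mset) ν.val μ.val →
      agreeOn (DeltaSet L Δ (Set.univ : Set U)) ν.val μ.val := by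
    intro ν hag
    exact hsm.2 ν μ hag (fun s _ => rfl)
  constructor
  · -- finite satisfiability
    intro s hs hpos
    have hsc : sᶜ ∈ DeltaSet L Δ (Set.univ : Set U) := hD'alg.2.1 _ hs
    obtain ⟨u, huD, hscu, hu⟩ := abstract_approx hDalg hD'alg hsub μ huniq sᶜ hsc hpos
    have hadd : μ.val (s ∪ sᶜ) = μ.val s + μ.val sᶜ :=
      μ.additive s sᶜ hs hsc disjoint_compl_right
    rw [Set.union_compl_self, μ.isProb] at hadd
    have huD' : u ∈ DeltaSet L Δ (Set.univ : Set U) := hsub huD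
    have hlD : uᶜ ∈ DeltaSet L Δ Mset := hDalg.2.1 _ huD
    have hls : uᶜ ⊆ s := by
      intro x hx
      by_contra hxs
      exact hx (hscu hxs)
    have haddu : μ.val (u ∪ uᶜ) = μ.val u + μ.val uᶜ :=
      μ.additive u uᶜ huD' (hsub hlD) disjoint_compl_right
    rw [Set.union_compl_self, μ.isProb] at haddu
    have hpos' : 0 < μ.val uᶜ := by linarith
    have hne : (uᶜ : Set (α → U)).Nonempty := by
      rcases Set.eq_empty_or_nonempty uᶜ with he | hne
      · rw [he, measure_empty hD'alg μ] at hpos'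
        exact absurd hpos' (lt_irrefl 0)
      · exact hne
    obtain ⟨a, hal, haM⟩ := delta_mem_point hM hlD hne
    exact ⟨a, hls hal, haM⟩
  · -- definability
    intro m φ hφ r b hbr
    have hsD' : defFam φ b ∈ DeltaSet L Δ (Set.univ : Set U) :=
      ⟨m, φ, b, hφ, fun j => trivial, rfl⟩
    have hε : 0 < r - μ.val (defFam φ b) := by linarith
    obtain ⟨u, huD, hsu, hu⟩ := abstract_approx hDalg hD'alg hsub μ huniq _ hsD' hε
    obtain ⟨m', χ, cc, hχΔ, hcc, rfl⟩ := huD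
    obtain ⟨ψ, hψ⟩ := exists_def_formula hM.1 φ χ cc hcc
    refine ⟨ψ, ?_, ?_⟩
    · rw [hψ b]
      intro a ha
      exact hsu ha
    · intro b' hb'
      have hsub' : defFam φ b' ⊆ defFam χ cc := by
        intro a ha
        exact (hψ b').mp hb' a ha
      have hb'D : defFam φ b' ∈ DeltaSet L Δ (Set.univ : Set U) :=
        ⟨m, φ, b', hφ, fun j => trivial, rfl⟩
      have huD2 : defFam χ cc ∈ DeltaSet L Δ (Set.univ : Set U) :=
        hsub ⟨m', χ, cc, hχΔ, hcc, rfl⟩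
      have hmono := measure_mono hD'alg μ hb'D huD2 hsub'
      linarith

end KeislerPaper
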